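/- Let z_1,…,z_{n+1} and w_1,…,w_{n+1} be points on the unit circle satisfying ∏ w_j = −∏ z_j, with all z_j distinct. Then f(z) = ∏_{j=1}^{n+1}(1 − conj(w_j)z)/∏_{j=1}^{n+1}(1 − conj(z_j)z) satisfies conj(f(1/conj(z))) = −f(z); consequently f admits a partial fraction expansion f(z) = Σ_{j=1}^{n+1} c_j·(z_j + z)/(z_j − z) with all c_j real and Σ c_j = 1. -/

import Mathlib

open Finset Polynomial
set_option maxRecDepth 8000

lemma uc_mul {a : ℂ} (h : ‖a‖ = 1) : (starRingEnd ℂ) a * a = 1 := by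
  have := Complex.mul_conj a
  rw [mul_comm] at this
  rw [this]
  norm_cast
  simp [Complex.normSq_eq_norm_sq, h]

lemma uc_ne {a : ℂ} (h : ‖a‖ = 1) : a ≠ 0 := by
  intro h0; rw [h0] at h; simp at h


lemma prod_neg_fin (m : ℕ) (g : Fin m → ℂ) : ∏ j, -g j = (-1 : ℂ)^m * ∏ j, g j := by
  have h : ∀ j, -g j = (-1 : ℂ) * g j := fun j => (neg_one_mul _).symm
  simp only [h]
  rw [Finset.prod_mul_distrib, Finset.prod_const, Finset.card_univ, Fintype.card_fin]

lemma pf_star (n : ℕ) (z w : Fin (n+1) → ℂ) (hz : ∀ j, ‖z j‖ = 1) (hw : ∀ j, ‖w j‖ = 1)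
    (hzinj : Function.Injective z) (hprod : ∏ j, w j = -∏ j, z j) (ζ : ℂ) :
    (∏ k, (1 - (starRingEnd ℂ) (w k) * ζ)) + (∏ k, (1 - (starRingEnd ℂ) (z k) * ζ))
      = ∑ j, (∏ k, (1 - (starRingEnd ℂ) (w k) * z j)) *
          ∏ k ∈ univ.erase j, ((z j - z k)⁻¹ * (ζ - z k)) := by
  classical
  set P : ℂ[X] := ∏ j, (1 - C ((starRingEnd ℂ) (w j)) * X) with hP
  set Q : ℂ[X] := ∏ j, (1 - C ((starRingEnd ℂ) (z j)) * X) with hQ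
  have hPev : ∀ t : ℂ, P.eval t = ∏ k, (1 - (starRingEnd ℂ) (w k) * t) := by
    intro t; simp [hP, eval_prod]
  have hQev : ∀ t : ℂ, Q.eval t = ∏ k, (1 - (starRingEnd ℂ) (z k) * t) := by
    intro t; simp [hQ, eval_prod]
  -- linear factor facts
  have hlin : ∀ a : ℂ, a ≠ 0 → ((1 : ℂ[X]) - C a * X).natDegree = 1 ∧
      ((1 : ℂ[X]) - C a * X).leadingCoeff = -a := by
    intro a ha
    have h1 : (1 : ℂ[X]) - C a * X = C (-a) * X + C 1 := by
      rw [map_neg, map_one]; ring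
    rw [h1]
    constructor
    · exact natDegree_linear (neg_ne_zero.mpr ha)
    · rw [leadingCoeff_linear (neg_ne_zero.mpr ha)]
  have hwne : ∀ j, (starRingEnd ℂ) (w j) ≠ 0 := fun j => by
    simpa using uc_ne (hw j)
  have hzne : ∀ j, (starRingEnd ℂ) (z j) ≠ 0 := fun j => by
    simpa using uc_ne (hz j)
  have hfacne : ∀ a : ℂ, a ≠ 0 → ((1 : ℂ[X]) - C a * X) ≠ 0 := by
    intro a ha h0
    have := (hlin a ha).1
    rw [h0] at this; simp at this
  have hPdeg : P.natDegree = n + 1 := by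
    rw [hP, natDegree_prod _ _ (fun j _ => hfacne _ (hwne j))]
    simp [fun j => (hlin _ (hwne j)).1]
  have hQdeg : Q.natDegree = n + 1 := by
    rw [hQ, natDegree_prod _ _ (fun j _ => hfacne _ (hzne j))]
    simp [fun j => (hlin _ (hzne j)).1]
  have hPlead : P.leadingCoeff = ∏ j, -((starRingEnd ℂ) (w j)) := by
    rw [hP, leadingCoeff_prod]
    exact Finset.prod_congr rfl fun j _ => (hlin _ (hwne j)).2
  have hQlead : Q.leadingCoeff = ∏ j, -((starRingEnd ℂ) (z j)) := by
    rw [hQ, leadingCoeff_prod]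
    exact Finset.prod_congr rfl fun j _ => (hlin _ (hzne j)).2
  have hlead0 : P.leadingCoeff + Q.leadingCoeff = 0 := by
    rw [hPlead, hQlead]
    have h1 : ∏ j, -((starRingEnd ℂ) (w j)) = (-1)^(n+1) * (starRingEnd ℂ) (∏ j, w j) := by
      rw [map_prod, prod_neg_fin]
    have h2 : ∏ j, -((starRingEnd ℂ) (z j)) = (-1)^(n+1) * (starRingEnd ℂ) (∏ j, z j) := by
      rw [map_prod, prod_neg_fin]
    rw [h1, h2, hprod]
    simp
  have hGdeg : (P + Q).degree < (#(univ : Finset (Fin (n+1))) : WithBot ℕ) := by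
    rw [Finset.card_univ, Fintype.card_fin]
    rw [degree_lt_iff_coeff_zero]
    intro m hm
    have hm' : n + 1 ≤ m := by exact_mod_cast hm
    rcases eq_or_lt_of_le hm' with h | h
    · have e1 : P.coeff (n+1) = P.leadingCoeff := by rw [← hPdeg]; rfl
      have e2 : Q.coeff (n+1) = Q.leadingCoeff := by rw [← hQdeg]; rfl
      rw [coeff_add, ← h, e1, e2, hlead0]
    · rw [coeff_add, coeff_eq_zero_of_natDegree_lt (by omega),
        coeff_eq_zero_of_natDegree_lt (by omega), add_zero]
  have hvs : Set.InjOn z (univ : Finset (Fin (n+1))) := hzinj.injOn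
  have hkey := Lagrange.eq_interpolate hvs hGdeg
  have hQz : ∀ j, Q.eval (z j) = 0 := by
    intro j
    rw [hQev]
    apply Finset.prod_eq_zero (Finset.mem_univ j)
    have := uc_mul (hz j)
    linear_combination -this
  rw [← hPev ζ, ← hQev ζ]
  have hev := congrArg (eval ζ) hkey
  rw [Lagrange.interpolate_apply, eval_finset_sum] at hev
  have : P.eval ζ + Q.eval ζ = (P + Q).eval ζ := by simp
  rw [this, hev]
  refine Finset.sum_congr rfl fun j _ => ?_
  rw [eval_mul, eval_C, eval_add, hQz, add_zero, hPev]
  congr 1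
  rw [Lagrange.basis, eval_prod]
  refine Finset.prod_congr rfl fun k _ => ?_
  simp [Lagrange.basisDivisor]


lemma conj_factor {a b : ℂ} (ha : (starRingEnd ℂ) a * a = 1) (hb : (starRingEnd ℂ) b * b = 1) :
    (starRingEnd ℂ) (1 - (starRingEnd ℂ) a * b) = (-a * (starRingEnd ℂ) b) * (1 - (starRingEnd ℂ) a * b) := by
  simp only [map_sub, map_one, map_mul, Complex.conj_conj]
  linear_combination (-(b * (starRingEnd ℂ) b)) * ha - hb

lemma inv_factor {a ζ : ℂ} (ha : (starRingEnd ℂ) a * a = 1) (hζ : ζ ≠ 0) :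
    1 - a * ζ⁻¹ = (-a * ζ⁻¹) * (1 - (starRingEnd ℂ) a * ζ) := by
  field_simp
  linear_combination -ζ * ha

lemma T_factor {a x t : ℂ} (ha : (starRingEnd ℂ) a * a = 1) (hxa : x ≠ a) :
    (1 - (starRingEnd ℂ) a * x) * ((x - a)⁻¹ * (t - a)) = 1 - (starRingEnd ℂ) a * t := by
  have h1 : x - a ≠ 0 := sub_ne_zero.mpr hxa
  field_simp
  linear_combination (x - t) * ha

lemma prod_neg_fs {ι : Type*} (s : Finset ι) (g : ι → ℂ) :
    ∏ j ∈ s, -g j = (-1 : ℂ)^(#s) * ∏ j ∈ s, g j := by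
  have h : ∀ j, -g j = (-1 : ℂ) * g j := fun j => (neg_one_mul _).symm
  simp only [h]
  rw [Finset.prod_mul_distrib, Finset.prod_const]

lemma fac_ne {a t : ℂ} (ha : ‖a‖ = 1) (h : t ≠ a) : 1 - (starRingEnd ℂ) a * t ≠ 0 := by
  have h1 : 1 - (starRingEnd ℂ) a * t = (starRingEnd ℂ) a * (a - t) := by
    linear_combination (-1 : ℂ) * uc_mul ha
  rw [h1]
  exact mul_ne_zero (by simpa using uc_ne ha) (sub_ne_zero.mpr (Ne.symm h))

/-- For points `z_j, w_j` on the unit circle with `∏ w_j = −∏ z_j` and the `z_j` distinct,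
the rational function `f(z) = ∏(1 − conj(w_j)z)/∏(1 − conj(z_j)z)` satisfies
`conj(f(1/conj z)) = −f(z)`, and admits a partial fraction expansion
`f(z) = Σ c_j (z_j + z)/(z_j − z)` with real `c_j` summing to `1`. -/
theorem quasi_caratheodory
    (n : ℕ) (z w : Fin (n + 1) → ℂ)
    (hz : ∀ j, ‖z j‖ = 1) (hw : ∀ j, ‖w j‖ = 1)
    (hzinj : Function.Injective z)
    (hprod : ∏ j, w j = -∏ j, z j) :
    (∀ ζ : ℂ, ζ ≠ 0 → (∀ j, ζ ≠ z j) →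
      (starRingEnd ℂ)
          ((∏ j, (1 - (starRingEnd ℂ) (w j) * ((starRingEnd ℂ) ζ)⁻¹))
            / ∏ j, (1 - (starRingEnd ℂ) (z j) * ((starRingEnd ℂ) ζ)⁻¹))
        = -((∏ j, (1 - (starRingEnd ℂ) (w j) * ζ)) / ∏ j, (1 - (starRingEnd ℂ) (z j) * ζ))) ∧
    (∃ c : Fin (n + 1) → ℝ, (∑ j, c j) = 1 ∧
      ∀ ζ : ℂ, (∀ j, ζ ≠ z j) →
        (∏ j, (1 - (starRingEnd ℂ) (w j) * ζ)) / ∏ j, (1 - (starRingEnd ℂ) (z j) * ζ)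
          = ∑ j, (c j : ℂ) * (z j + ζ) / (z j - ζ)) := by
  classical
  have hzz : ∀ j, (starRingEnd ℂ) (z j) * z j = 1 := fun j => uc_mul (hz j)
  constructor
  · -- Part 1 : symmetry
    intro ζ hζ0 hζz
    have hD : (∏ j, (1 - (starRingEnd ℂ) (z j) * ζ)) ≠ 0 :=
      Finset.prod_ne_zero_iff.mpr fun j _ => fac_ne (hz j) (hζz j)
    rw [map_div₀, map_prod, map_prod]
    have hw' : ∀ j, (starRingEnd ℂ) (1 - (starRingEnd ℂ) (w j) * ((starRingEnd ℂ) ζ)⁻¹)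
        = (-(w j) * ζ⁻¹) * (1 - (starRingEnd ℂ) (w j) * ζ) := by
      intro j
      simp only [map_sub, map_one, map_mul, map_inv₀, Complex.conj_conj]
      exact inv_factor (uc_mul (hw j)) hζ0
    have hz' : ∀ j, (starRingEnd ℂ) (1 - (starRingEnd ℂ) (z j) * ((starRingEnd ℂ) ζ)⁻¹)
        = (-(z j) * ζ⁻¹) * (1 - (starRingEnd ℂ) (z j) * ζ) := by
      intro j
      simp only [map_sub, map_one, map_mul, map_inv₀, Complex.conj_conj]
      exact inv_factor (uc_mul (hz j)) hζ0
    have E1 : ∏ j, ((-(w j) * ζ⁻¹) * (1 - (starRingEnd ℂ) (w j) * ζ))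
        = (((-1 : ℂ)^(n+1) * (ζ⁻¹)^(n+1)) * ∏ j, w j) * ∏ j, (1 - (starRingEnd ℂ) (w j) * ζ) := by
      rw [Finset.prod_mul_distrib]
      congr 1
      have h : ∀ j : Fin (n+1), -(w j) * ζ⁻¹ = -((w j) * ζ⁻¹) := fun j => by ring
      simp only [h]
      rw [prod_neg_fin, Finset.prod_mul_distrib, Finset.prod_const, Finset.card_univ,
        Fintype.card_fin]
      ring
    have E2 : ∏ j, ((-(z j) * ζ⁻¹) * (1 - (starRingEnd ℂ) (z j) * ζ))
        = (((-1 : ℂ)^(n+1) * (ζ⁻¹)^(n+1)) * ∏ j, z j) * ∏ j, (1 - (starRingEnd ℂ) (z j) * ζ) := by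
      rw [Finset.prod_mul_distrib]
      congr 1
      have h : ∀ j : Fin (n+1), -(z j) * ζ⁻¹ = -((z j) * ζ⁻¹) := fun j => by ring
      simp only [h]
      rw [prod_neg_fin, Finset.prod_mul_distrib, Finset.prod_const, Finset.card_univ,
        Fintype.card_fin]
      ring
    rw [Finset.prod_congr rfl (fun j _ => hw' j), Finset.prod_congr rfl (fun j _ => hz' j),
      E1, E2, hprod]
    have hs : (((-1 : ℂ)^(n+1) * (ζ⁻¹)^(n+1)) * ∏ j, z j) ≠ 0 := by
      refine mul_ne_zero (mul_ne_zero (pow_ne_zero _ (by norm_num))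
        (pow_ne_zero _ (inv_ne_zero hζ0))) ?_
      exact Finset.prod_ne_zero_iff.mpr fun j _ => uc_ne (hz j)
    rw [mul_neg, neg_mul, neg_div, mul_div_mul_left _ _ hs]
  · -- Part 2 : partial fractions
    set e : Fin (n+1) → ℂ := fun j =>
      (∏ k, (1 - (starRingEnd ℂ) (w k) * z j))
        / (2 * ∏ k ∈ univ.erase j, (1 - (starRingEnd ℂ) (z k) * z j)) with he
    have hBne : ∀ j, (∏ k ∈ univ.erase j, (1 - (starRingEnd ℂ) (z k) * z j)) ≠ 0 := by
      intro j
      refine Finset.prod_ne_zero_iff.mpr fun k hk => fac_ne (hz k) ?_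
      intro hjk
      exact (Finset.mem_erase.mp hk).1 (hzinj hjk.symm)
    have hT : ∀ (j : Fin (n+1)) (t : ℂ),
        2 * e j * ∏ k ∈ univ.erase j, (1 - (starRingEnd ℂ) (z k) * t)
          = (∏ k, (1 - (starRingEnd ℂ) (w k) * z j)) *
              ∏ k ∈ univ.erase j, ((z j - z k)⁻¹ * (t - z k)) := by
      intro j t
      have h2e : 2 * e j = (∏ k, (1 - (starRingEnd ℂ) (w k) * z j))
          / (∏ k ∈ univ.erase j, (1 - (starRingEnd ℂ) (z k) * z j)) := by
        rw [he]
        simp only [mul_div_assoc']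
        exact mul_div_mul_left _ _ two_ne_zero
      have hsplit : ∏ k ∈ univ.erase j, (1 - (starRingEnd ℂ) (z k) * t)
          = (∏ k ∈ univ.erase j, (1 - (starRingEnd ℂ) (z k) * z j)) *
            ∏ k ∈ univ.erase j, ((z j - z k)⁻¹ * (t - z k)) := by
        rw [← Finset.prod_mul_distrib]
        refine Finset.prod_congr rfl fun k hk => ?_
        have hjk : z j ≠ z k := fun h => (Finset.mem_erase.mp hk).1 (hzinj h).symm
        exact (T_factor (hzz k) hjk).symm
      rw [h2e, hsplit, ← mul_assoc, div_mul_cancel₀ _ (hBne j)]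
    have hsum1 : ∑ j, e j = 1 := by
      have h0 := pf_star n z w hz hw hzinj hprod 0
      simp only [mul_zero, sub_zero, Finset.prod_const_one] at h0
      have hT0 : ∀ j : Fin (n+1), 2 * e j
          = (∏ k, (1 - (starRingEnd ℂ) (w k) * z j)) *
              ∏ k ∈ univ.erase j, ((z j - z k)⁻¹ * (0 - z k)) := by
        intro j
        have h := hT j 0
        simpa using h
      have hs2 : (2 : ℂ) * ∑ j, e j = 2 := by
        rw [Finset.mul_sum, Finset.sum_congr rfl fun j _ => hT0 j, ← h0]
        norm_num
      have := mul_left_cancel₀ (two_ne_zero (α := ℂ)) (hs2.trans (mul_one 2).symm)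
      exact this
    have hmain : ∀ ζ : ℂ, (∀ j, ζ ≠ z j) →
        (∏ j, (1 - (starRingEnd ℂ) (w j) * ζ)) / ∏ j, (1 - (starRingEnd ℂ) (z j) * ζ)
          = ∑ j, e j * (z j + ζ) / (z j - ζ) := by
      intro ζ hζz
      have hD : (∏ j, (1 - (starRingEnd ℂ) (z j) * ζ)) ≠ 0 :=
        Finset.prod_ne_zero_iff.mpr fun j _ => fac_ne (hz j) (hζz j)
      rw [div_eq_iff hD, Finset.sum_mul]
      have hterm : ∀ j : Fin (n+1),
          e j * (z j + ζ) / (z j - ζ) * ∏ k, (1 - (starRingEnd ℂ) (z k) * ζ)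
            = 2 * e j * (∏ k ∈ univ.erase j, (1 - (starRingEnd ℂ) (z k) * ζ))
              - e j * ∏ k, (1 - (starRingEnd ℂ) (z k) * ζ) := by
        intro j
        have h1 : ∏ k, (1 - (starRingEnd ℂ) (z k) * ζ)
            = (1 - (starRingEnd ℂ) (z j) * ζ) *
              ∏ k ∈ univ.erase j, (1 - (starRingEnd ℂ) (z k) * ζ) :=
          (Finset.mul_prod_erase _ _ (Finset.mem_univ j)).symm
        have hzζ : z j - ζ ≠ 0 := sub_ne_zero.mpr (Ne.symm (hζz j))
        rw [h1]
        rw [div_mul_eq_mul_div, div_eq_iff hzζ]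
        linear_combination (-(2 * e j * ζ *
          ∏ x ∈ univ.erase j, (1 - (starRingEnd ℂ) (z x) * ζ))) * hzz j
      rw [Finset.sum_congr rfl fun j _ => hterm j, Finset.sum_sub_distrib, ← Finset.sum_mul]
      have h2 : ∑ j, 2 * e j * ∏ k ∈ univ.erase j, (1 - (starRingEnd ℂ) (z k) * ζ)
          = (∏ j, (1 - (starRingEnd ℂ) (w j) * ζ)) + ∏ j, (1 - (starRingEnd ℂ) (z j) * ζ) := by
        rw [Finset.sum_congr rfl fun j _ => hT j ζ]
        exact (pf_star n z w hz hw hzinj hprod ζ).symm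
      rw [h2, hsum1, one_mul]
      ring
    have hreal : ∀ j, (starRingEnd ℂ) (e j) = e j := by
      intro j
      have hA : (starRingEnd ℂ) (∏ k, (1 - (starRingEnd ℂ) (w k) * z j))
          = ((-1 : ℂ)^(n+1) * (∏ k, w k) * ((starRingEnd ℂ) (z j))^(n+1)) *
              ∏ k, (1 - (starRingEnd ℂ) (w k) * z j) := by
        rw [map_prod, Finset.prod_congr rfl fun k _ => conj_factor (uc_mul (hw k)) (hzz j),
          Finset.prod_mul_distrib]
        have h : ∀ k : Fin (n+1), -(w k) * (starRingEnd ℂ) (z j)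
            = -((w k) * (starRingEnd ℂ) (z j)) := fun k => by ring
        simp only [h]
        rw [prod_neg_fin, Finset.prod_mul_distrib, Finset.prod_const, Finset.card_univ,
          Fintype.card_fin]
        ring
      have hB : (starRingEnd ℂ) (∏ k ∈ univ.erase j, (1 - (starRingEnd ℂ) (z k) * z j))
          = ((-1 : ℂ)^n * (∏ k ∈ univ.erase j, z k) * ((starRingEnd ℂ) (z j))^n) *
              ∏ k ∈ univ.erase j, (1 - (starRingEnd ℂ) (z k) * z j) := by
        rw [map_prod, Finset.prod_congr rfl fun k _ => conj_factor (uc_mul (hz k)) (hzz j),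
          Finset.prod_mul_distrib]
        have h : ∀ k : Fin (n+1), -(z k) * (starRingEnd ℂ) (z j)
            = -((z k) * (starRingEnd ℂ) (z j)) := fun k => by ring
        simp only [h]
        rw [prod_neg_fs, Finset.prod_mul_distrib, Finset.prod_const,
          Finset.card_erase_of_mem (Finset.mem_univ j), Finset.card_univ, Fintype.card_fin]
        have hn : n + 1 - 1 = n := by omega
        rw [hn]
        ring
      have hcoef : ((-1 : ℂ)^(n+1) * (∏ k, w k) * ((starRingEnd ℂ) (z j))^(n+1))
          = ((-1 : ℂ)^n * (∏ k ∈ univ.erase j, z k) * ((starRingEnd ℂ) (z j))^n) := by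
        rw [hprod, ← Finset.mul_prod_erase univ z (Finset.mem_univ j), pow_succ, pow_succ]
        linear_combination ((-1 : ℂ)^n * (∏ k ∈ univ.erase j, z k) *
          ((starRingEnd ℂ) (z j))^n) * hzz j
      have hc : ((-1 : ℂ)^n * (∏ k ∈ univ.erase j, z k) * ((starRingEnd ℂ) (z j))^n) ≠ 0 := by
        refine mul_ne_zero (mul_ne_zero (pow_ne_zero _ (by norm_num)) ?_) (pow_ne_zero _ ?_)
        · exact Finset.prod_ne_zero_iff.mpr fun k _ => uc_ne (hz k)
        · simpa using uc_ne (hz j)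
      simp only [he]
      rw [map_div₀, map_mul, hA, hB, hcoef]
      have h2 : (starRingEnd ℂ) (2 : ℂ) = 2 := map_ofNat _ 2
      rw [h2, show (2 : ℂ) * (((-1 : ℂ)^n * (∏ k ∈ univ.erase j, z k) *
            ((starRingEnd ℂ) (z j))^n) * ∏ k ∈ univ.erase j, (1 - (starRingEnd ℂ) (z k) * z j))
          = ((-1 : ℂ)^n * (∏ k ∈ univ.erase j, z k) * ((starRingEnd ℂ) (z j))^n) *
            (2 * ∏ k ∈ univ.erase j, (1 - (starRingEnd ℂ) (z k) * z j)) from by ring,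
        mul_div_mul_left _ _ hc]
    have hre : ∀ j, (((e j).re : ℝ) : ℂ) = e j := fun j => Complex.conj_eq_iff_re.mp (hreal j)
    refine ⟨fun j => (e j).re, ?_, ?_⟩
    · have h : ((∑ j, (e j).re : ℝ) : ℂ) = ((1 : ℝ) : ℂ) := by
        push_cast
        rw [Finset.sum_congr rfl fun j _ => hre j, hsum1]
      exact_mod_cast h
    · intro ζ hζz
      rw [hmain ζ hζz]
      exact Finset.sum_congr rfl fun j _ => by rw [hre j]
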